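/- Let C > 0, let d : ℕ → ℝ⁺ satisfy d ≥ 3, and let (G_n) be a sequence of random graph models on n vertices such that for all large n and all disjoint X, Y ⊆ V(G) with either 1 ≤ |X| < m(n,d) and |Y| = n − ⌈(d+1)|X|⌉ + 1, or |X| = |Y| = m(n,d), one has Pr[e_G(X,Y) = 0] ≤ C·n^{−6d|X||Y|/n}. Then a random graph drawn from G_n is a.a.s. an (n,d)-expander. -/

import Mathlib

open Finset

/-- The external neighborhood of a vertex set `X` in a graph `G`: all vertices outside `X`
with a neighbor in `X`. -/
noncomputable def extNbhd {V : Type*} [Fintype V] [DecidableEq V] (G : SimpleGraph V)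
    (X : Finset V) : Finset V := by
  classical exact univ.filter fun v => v ∉ X ∧ ∃ x ∈ X, G.Adj x v

/-- `eCount G X Y` is the number of ordered pairs `(x, y) ∈ X × Y` with `{x,y} ∈ E(G)`. -/
noncomputable def eCount {V : Type*} [DecidableEq V] (G : SimpleGraph V)
    (X Y : Finset V) : ℕ := by
  classical exact ((X ×ˢ Y).filter fun p => G.Adj p.1 p.2).card

/-- `mOf n d = ⌈n / (2d)⌉`. -/
noncomputable def mOf (n : ℕ) (d : ℝ) : ℕ := ⌈(n : ℝ) / (2 * d)⌉₊

/-- A graph `G` is an `(n,d)`-expander if it has `n` vertices,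
(E1) `|N_G(X)| ≥ d|X|` for all `X` with `1 ≤ |X| < m(n,d)`, and
(E2) there is an edge between any two disjoint sets of size `m(n,d)`. -/
def IsExpander {V : Type*} [Fintype V] [DecidableEq V] (G : SimpleGraph V)
    (n : ℕ) (d : ℝ) : Prop :=
  Fintype.card V = n ∧
  (∀ X : Finset V, 1 ≤ X.card → X.card < mOf n d →
    d * X.card ≤ ((extNbhd G X).card : ℝ)) ∧
  (∀ X Y : Finset V, Disjoint X Y → X.card = mOf n d → Y.card = mOf n d →
    0 < eCount G X Y)

open MeasureTheory

instance (n : ℕ) : MeasurableSpace (SimpleGraph (Fin n)) := ⊤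

section Aux

set_option maxHeartbeats 1000000

noncomputable def cOf (dn : ℝ) (k : ℕ) : ℕ := (⌈(dn + 1) * (k : ℝ)⌉).toNat

noncomputable def tOf (n : ℕ) (dn : ℝ) (k : ℕ) : ℕ := n + 1 - cOf dn k

lemma e1_facts (n k : ℕ) (dn : ℝ) (hd : 3 ≤ dn) (hk1 : 1 ≤ k) (hk : k < mOf n dn) :
    (dn + 1) * (k : ℝ) ≤ 2 * (n : ℝ) / 3 ∧ (6 : ℝ) < n := by
  have hdn0 : (0:ℝ) < dn := by linarith
  have hx : (0:ℝ) ≤ (n:ℝ)/(2*dn) := by positivity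
  have hm : (mOf n dn : ℝ) < (n:ℝ)/(2*dn) + 1 := by
    have := Nat.ceil_lt_add_one hx
    simpa [mOf] using this
  have hkm : (k:ℝ) + 1 ≤ (mOf n dn : ℝ) := by exact_mod_cast hk
  have hkr : (k:ℝ) < (n:ℝ)/(2*dn) := by linarith
  have hk1' : (1:ℝ) ≤ k := by exact_mod_cast hk1
  have hn : 2*dn < n := by
    have h1 : (1:ℝ) < (n:ℝ)/(2*dn) := lt_of_le_of_lt hk1' hkr
    rw [lt_div_iff₀ (by positivity)] at h1
    linarith
  have h6n : (6:ℝ) < n := by linarith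
  refine ⟨?_, h6n⟩
  have h2 : (dn+1)*(k:ℝ) < (dn+1)*((n:ℝ)/(2*dn)) :=
    mul_lt_mul_of_pos_left hkr (by linarith)
  have h3 : (dn+1)*((n:ℝ)/(2*dn)) ≤ 2*(n:ℝ)/3 := by
    rw [mul_div_assoc', div_le_div_iff₀ (by positivity) (by norm_num)]
    nlinarith [Nat.cast_nonneg (α := ℝ) n]
  linarith

lemma ceil_nonneg' (dn : ℝ) (hd : 3 ≤ dn) (k : ℕ) : (0:ℤ) ≤ ⌈(dn + 1) * (k : ℝ)⌉ :=
  Int.ceil_nonneg (by positivity)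

lemma cOf_cast (dn : ℝ) (hd : 3 ≤ dn) (k : ℕ) :
    ((cOf dn k : ℝ)) = ((⌈(dn + 1) * (k : ℝ)⌉ : ℤ) : ℝ) := by
  rw [cOf]
  norm_cast
  exact Int.toNat_of_nonneg (ceil_nonneg' dn hd k)

lemma cOf_facts (n k : ℕ) (dn : ℝ) (hd : 3 ≤ dn) (hk1 : 1 ≤ k) (hk : k < mOf n dn) :
    (dn + 1) * (k : ℝ) ≤ (cOf dn k : ℝ) ∧ (cOf dn k : ℝ) ≤ (dn + 1) * k + 1 ∧
      cOf dn k ≤ n ∧ 1 ≤ cOf dn k ∧ (tOf n dn k : ℝ) = (n : ℝ) + 1 - cOf dn k ∧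
      (n : ℝ) / 3 ≤ (tOf n dn k : ℝ) := by
  obtain ⟨h23, h6⟩ := e1_facts n k dn hd hk1 hk
  have hk1' : (1:ℝ) ≤ k := by exact_mod_cast hk1
  have hcast := cOf_cast dn hd k
  have hle : (dn + 1) * (k : ℝ) ≤ (cOf dn k : ℝ) := by
    rw [hcast]; exact Int.le_ceil _
  have hub : (cOf dn k : ℝ) ≤ (dn + 1) * k + 1 := by
    rw [hcast]
    exact le_of_lt (Int.ceil_lt_add_one _)
  have hcn : cOf dn k ≤ n := by
    have : (cOf dn k : ℝ) ≤ (n : ℝ) := by linarith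
    exact_mod_cast this
  have hc1 : 1 ≤ cOf dn k := by
    have : (1:ℝ) ≤ (cOf dn k : ℝ) := by nlinarith
    exact_mod_cast this
  have htc : (tOf n dn k : ℝ) = (n : ℝ) + 1 - cOf dn k := by
    rw [tOf]
    have : cOf dn k ≤ n + 1 := le_trans hcn (Nat.le_succ n)
    push_cast [Nat.cast_sub this]
    ring
  refine ⟨hle, hub, hcn, hc1, htc, ?_⟩
  rw [htc]; linarith

/-- The condition in the hypothesis. -/
def Cond (n : ℕ) (dn : ℝ) (X Y : Finset (Fin n)) : Prop :=
  (1 ≤ X.card ∧ X.card < mOf n dn ∧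
      (Y.card : ℝ) = (n : ℝ) - (⌈(dn + 1) * X.card⌉ : ℝ) + 1) ∨
    (X.card = mOf n dn ∧ Y.card = mOf n dn)

lemma card_cond_iff (n : ℕ) (dn : ℝ) (hd : 3 ≤ dn) (k : ℕ) (hk : cOf dn k ≤ n)
    (Y : Finset (Fin n)) :
    ((Y.card : ℝ) = (n : ℝ) - (⌈(dn + 1) * (k : ℝ)⌉ : ℝ) + 1) ↔ Y.card = tOf n dn k := by
  have h1 : (tOf n dn k : ℝ) = (n : ℝ) + 1 - cOf dn k := by
    rw [tOf]
    have : cOf dn k ≤ n + 1 := le_trans hk (Nat.le_succ n)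
    push_cast [Nat.cast_sub this]; ring
  rw [← cOf_cast dn hd k]
  constructor
  · intro hY
    have : (Y.card : ℝ) = (tOf n dn k : ℝ) := by rw [h1]; linarith
    exact_mod_cast this
  · intro hY
    rw [hY, h1]; ring

lemma exists_bad_pair (n : ℕ) (dn : ℝ) (hd : 3 ≤ dn) (G : SimpleGraph (Fin n))
    (hG : ¬ IsExpander G n dn) :
    ∃ X Y : Finset (Fin n), Disjoint X Y ∧ Cond n dn X Y ∧ eCount G X Y = 0 := by
  classical
  rw [IsExpander] at hG
  push_neg at hG
  have hcard : Fintype.card (Fin n) = n := Fintype.card_fin n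
  by_cases hE1 : ∀ X : Finset (Fin n), 1 ≤ X.card → X.card < mOf n dn →
      dn * X.card ≤ ((extNbhd G X).card : ℝ)
  case neg =>
    push_neg at hE1
    obtain ⟨X, hX1, hXm, hXbad⟩ := hE1
    -- E1 failure
    obtain ⟨hle, hub, hcn, hc1, htc, ht3⟩ := cOf_facts n X.card dn hd hX1 hXm
    set S := X ∪ extNbhd G X with hS
    have hScard : (S.card : ℝ) < (cOf dn X.card : ℝ) := by
      have h1 : S.card ≤ X.card + (extNbhd G X).card := card_union_le _ _
      have h2 : (S.card : ℝ) ≤ (X.card : ℝ) + ((extNbhd G X).card : ℝ) := by exact_mod_cast h1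
      have h3 : dn * X.card > ((extNbhd G X).card : ℝ) := hXbad
      nlinarith
    have hSn : S.card + 1 ≤ cOf dn X.card := by
      have : S.card < cOf dn X.card := by exact_mod_cast hScard
      omega
    -- the complement of S has at least tOf elements
    have hcompl : tOf n dn X.card ≤ (Sᶜ).card := by
      rw [card_compl, Fintype.card_fin, tOf]
      omega
    obtain ⟨Y, hYsub, hYcard⟩ := exists_subset_card_eq hcompl
    have hdisj : Disjoint X Y := by
      refine disjoint_left.2 fun a haX haY => ?_
      have := hYsub haY
      rw [mem_compl, hS, mem_union] at this
      exact this (Or.inl haX)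
    refine ⟨X, Y, hdisj, Or.inl ⟨hX1, hXm, ?_⟩, ?_⟩
    · exact (card_cond_iff n dn hd X.card hcn Y).2 hYcard
    · rw [eCount]
      rw [card_eq_zero, filter_eq_empty_iff]
      rintro ⟨x, y⟩ hxy
      rw [mem_product] at hxy
      intro hadj
      have hyS := hYsub hxy.2
      rw [mem_compl, hS, mem_union] at hyS
      push_neg at hyS
      exact hyS.2 (by
        simp only [extNbhd, mem_filter]
        exact ⟨mem_univ _, hyS.1, x, hxy.1, hadj⟩)
  case pos =>
    obtain ⟨X, Y, hdisj, hXc, hYc, hE⟩ := hG hcard hE1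
    exact ⟨X, Y, hdisj, Or.inr ⟨hXc, hYc⟩, Nat.le_zero.1 hE⟩

noncomputable def badPairs (n : ℕ) (dn : ℝ) : Finset (Finset (Fin n) × Finset (Fin n)) := by
  classical exact univ.filter fun p => Disjoint p.1 p.2 ∧ Cond n dn p.1 p.2

lemma mem_badPairs {n : ℕ} {dn : ℝ} {p : Finset (Fin n) × Finset (Fin n)} :
    p ∈ badPairs n dn ↔ Disjoint p.1 p.2 ∧ Cond n dn p.1 p.2 := by
  unfold badPairs
  simp [Finset.mem_filter]

/-- counting: a set of pairs with fixed cards has card at most `choose n a * choose n b`. -/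
lemma card_pairs_le {n : ℕ} (s : Finset (Finset (Fin n) × Finset (Fin n))) (a b : ℕ)
    (hs : ∀ p ∈ s, p.1.card = a ∧ p.2.card = b) :
    s.card ≤ n.choose a * n.choose b := by
  classical
  have hsub : s ⊆ powersetCard a univ ×ˢ powersetCard b univ := by
    intro p hp
    rw [mem_product, mem_powersetCard, mem_powersetCard]
    exact ⟨⟨subset_univ _, (hs p hp).1⟩, ⟨subset_univ _, (hs p hp).2⟩⟩
  calc s.card ≤ _ := card_le_card hsub
    _ = n.choose a * n.choose b := by
        rw [card_product, card_powersetCard, card_powersetCard, card_univ, Fintype.card_fin]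

/-- power-combining inequality. -/
lemma pow_mul_rpow_le (n : ℕ) (hn : 2 ≤ n) (C : ℝ) (hC : 0 < C) (a b : ℕ) (e s : ℝ)
    (hab : (a : ℝ) + b + e ≤ -s) :
    (n : ℝ) ^ a * (n : ℝ) ^ b * (C * (n : ℝ) ^ e) ≤ C * (n : ℝ) ^ (-s) := by
  have hn0 : (0 : ℝ) < n := by positivity
  have hn1 : (1 : ℝ) ≤ n := by exact_mod_cast Nat.one_le_of_lt hn
  have h1 : (n : ℝ) ^ a * (n : ℝ) ^ b * (n : ℝ) ^ e = (n : ℝ) ^ ((a : ℝ) + b + e) := by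
    rw [Real.rpow_add hn0, Real.rpow_add hn0, Real.rpow_natCast, Real.rpow_natCast]
  calc (n : ℝ) ^ a * (n : ℝ) ^ b * (C * (n : ℝ) ^ e)
      = C * ((n : ℝ) ^ a * (n : ℝ) ^ b * (n : ℝ) ^ e) := by ring
    _ = C * (n : ℝ) ^ ((a : ℝ) + b + e) := by rw [h1]
    _ ≤ C * (n : ℝ) ^ (-s) :=
        mul_le_mul_of_nonneg_left (Real.rpow_le_rpow_of_exponent_le hn1 hab) hC.le

lemma geom_bound (n : ℕ) (hn : 2 ≤ n) (C : ℝ) (hC : 0 < C) :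
    ∑ k ∈ Finset.range (n + 1),
        (if k = 0 then (0 : ℝ) else C * (n : ℝ) ^ (-(k : ℝ))) ≤ 2 * C / n := by
  have hn0 : (0 : ℝ) < n := by positivity
  set r : ℝ := (n : ℝ)⁻¹ with hr
  have hr0 : 0 ≤ r := by positivity
  have hrhalf : r ≤ 1 / 2 := by
    rw [hr]
    rw [inv_le_comm₀ (by positivity) (by norm_num)]
    norm_num
    exact_mod_cast hn
  have hrpow : ∀ k : ℕ, (n : ℝ) ^ (-(k : ℝ)) = r ^ k := by
    intro k
    rw [Real.rpow_neg hn0.le, Real.rpow_natCast, hr, inv_pow]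
  have hgeom : ∑ j ∈ Finset.range n, r ^ j ≤ 2 := by
    have hrne : r ≠ 1 := by intro hr1; rw [hr1] at hrhalf; norm_num at hrhalf
    rw [geom_sum_eq hrne]
    have : (r ^ n - 1) / (r - 1) = (1 - r ^ n) / (1 - r) := by
      rw [← neg_div_neg_eq]; ring_nf
    rw [this, div_le_iff₀ (by linarith)]
    nlinarith [pow_nonneg hr0 n]
  calc ∑ k ∈ Finset.range (n + 1), (if k = 0 then (0 : ℝ) else C * (n : ℝ) ^ (-(k : ℝ)))
      = (∑ j ∈ Finset.range n,
          (if j + 1 = 0 then (0 : ℝ) else C * (n : ℝ) ^ (-((j + 1 : ℕ) : ℝ)))) + 0 := by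
        rw [Finset.sum_range_succ']; simp
    _ = ∑ j ∈ Finset.range n, C * r * r ^ j := by
        rw [add_zero]
        refine Finset.sum_congr rfl fun j _ => ?_
        rw [if_neg (Nat.succ_ne_zero j), hrpow (j + 1), pow_succ]
        ring
    _ = C * r * ∑ j ∈ Finset.range n, r ^ j := by rw [Finset.mul_sum]
    _ ≤ C * r * 2 := by
        apply mul_le_mul_of_nonneg_left hgeom (by positivity)
    _ = 2 * C / n := by rw [hr]; field_simp

lemma sum_bad_le (n : ℕ) (hn : 2 ≤ n) (dn : ℝ) (hd : 3 ≤ dn) (C : ℝ) (hC : 0 < C) :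
    ∑ p ∈ badPairs n dn, C * (n : ℝ) ^ (-(6 * dn * p.1.card * p.2.card) / n) ≤ 3 * C / n := by
  classical
  have hn0 : (0 : ℝ) < n := by positivity
  have hn1 : (1 : ℝ) ≤ n := by exact_mod_cast Nat.one_le_of_lt hn
  have hdn0 : (0 : ℝ) < dn := by linarith
  set f : Finset (Fin n) × Finset (Fin n) → ℝ :=
    fun p => C * (n : ℝ) ^ (-(6 * dn * p.1.card * p.2.card) / n) with hf
  have hfpos : ∀ p, 0 < f p := fun p => mul_pos hC (Real.rpow_pos_of_pos hn0 _)
  set m := mOf n dn with hm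
  -- facts about m
  have hm1 : 1 ≤ m := by
    rw [hm, mOf]
    refine Nat.one_le_iff_ne_zero.2 (fun h0 => ?_)
    rw [Nat.ceil_eq_zero] at h0
    have : (0:ℝ) < (n : ℝ) / (2 * dn) := by positivity
    linarith
  have hm1' : (1 : ℝ) ≤ m := by exact_mod_cast hm1
  have hnm : (n : ℝ) ≤ 2 * dn * m := by
    have h1 := Nat.le_ceil ((n : ℝ) / (2 * dn))
    rw [show (⌈(n : ℝ) / (2 * dn)⌉₊ : ℝ) = (m : ℝ) by rw [hm, mOf]] at h1
    rw [div_le_iff₀ (by positivity)] at h1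
    linarith
  -- split into the two parts
  rw [← Finset.sum_filter_add_sum_filter_not (badPairs n dn) (fun p => p.1.card < m) f]
  have hP2 : ∑ p ∈ (badPairs n dn).filter (fun p => ¬ p.1.card < m), f p ≤ C / n := by
    set P2 := (badPairs n dn).filter (fun p => ¬ p.1.card < m) with hP2def
    have hmem : ∀ p ∈ P2, p.1.card = m ∧ p.2.card = m := by
      intro p hp
      rw [hP2def, mem_filter, mem_badPairs] at hp
      obtain ⟨⟨-, hcond⟩, hlt⟩ := hp
      rcases hcond with ⟨-, hlt', -⟩ | ⟨h1, h2⟩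
      · exact absurd hlt' hlt
      · exact ⟨h1, h2⟩
    set B : ℝ := C * (n : ℝ) ^ (-(3 * (m : ℝ))) with hB
    have hB0 : 0 ≤ B := by
      apply mul_nonneg hC.le (Real.rpow_pos_of_pos hn0 _).le
    have hterm : ∀ p ∈ P2, f p ≤ B := by
      intro p hp
      obtain ⟨h1, h2⟩ := hmem p hp
      rw [hf]
      simp only [h1, h2, hB]
      apply mul_le_mul_of_nonneg_left _ hC.le
      apply Real.rpow_le_rpow_of_exponent_le hn1
      rw [div_le_iff₀ hn0]
      nlinarith
    calc ∑ p ∈ P2, f p ≤ P2.card • B := Finset.sum_le_card_nsmul _ _ _ hterm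
      _ = (P2.card : ℝ) * B := by rw [nsmul_eq_mul]
      _ ≤ ((n.choose m * n.choose m : ℕ) : ℝ) * B := by
          apply mul_le_mul_of_nonneg_right _ hB0
          exact_mod_cast card_pairs_le P2 m m hmem
      _ ≤ (n : ℝ) ^ m * (n : ℝ) ^ m * B := by
          apply mul_le_mul_of_nonneg_right _ hB0
          push_cast
          have h1 : ((n.choose m : ℕ) : ℝ) ≤ (n : ℝ) ^ m := by
            exact_mod_cast Nat.choose_le_pow n m
          have h2 : (0 : ℝ) ≤ (n.choose m : ℕ) := by positivity
          nlinarith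
      _ ≤ C * (n : ℝ) ^ (-(1 : ℝ)) := by
          rw [hB]
          apply pow_mul_rpow_le n hn C hC m m _ 1
          nlinarith
      _ = C / n := by rw [Real.rpow_neg_one]; ring
  have hP1 : ∑ p ∈ (badPairs n dn).filter (fun p => p.1.card < m), f p ≤ 2 * C / n := by
    set P1 := (badPairs n dn).filter (fun p => p.1.card < m) with hP1def
    have hsplit : ∑ p ∈ P1, f p =
        ∑ k ∈ Finset.range (n + 1), ∑ p ∈ P1.filter (fun p => p.1.card = k), f p := by
      refine (Finset.sum_fiberwise_of_maps_to (fun p _ => ?_) f).symm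
      rw [Finset.mem_range]
      have := Finset.card_le_univ p.1
      rw [Fintype.card_fin] at this
      omega
    rw [hsplit]
    refine le_trans (Finset.sum_le_sum (fun k hk => ?_)) (geom_bound n hn C hC)
    -- bound each fiber
    by_cases hk0 : k = 0
    · rw [if_pos hk0]
      have : P1.filter (fun p => p.1.card = k) = ∅ := by
        rw [Finset.eq_empty_iff_forall_notMem]
        intro p hp
        rw [Finset.mem_filter, hP1def, Finset.mem_filter, mem_badPairs] at hp
        obtain ⟨⟨⟨-, hcond⟩, hlt⟩, hck⟩ := hp
        rcases hcond with ⟨h1, -, -⟩ | ⟨h1, -⟩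
        · omega
        · omega
      rw [this, Finset.sum_empty]
    · rw [if_neg hk0]
      have hk1 : 1 ≤ k := Nat.one_le_iff_ne_zero.2 hk0
      set s := P1.filter (fun p => p.1.card = k) with hs
      by_cases hne : s.Nonempty
      case neg =>
        rw [Finset.not_nonempty_iff_eq_empty] at hne
        rw [hne, Finset.sum_empty]
        positivity
      -- nonempty fiber: extract k < m
      obtain ⟨q, hq⟩ := hne
      have hqm : k < m := by
        rw [hs, Finset.mem_filter, hP1def, Finset.mem_filter] at hq
        omega
      obtain ⟨hcle, hcub, hcn, hc1, htc, ht3⟩ := cOf_facts n k dn hd hk1 hqm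
      set c := cOf dn k with hc
      set t := tOf n dn k with ht
      have htn : t ≤ n := by
        have : (t : ℝ) ≤ (n : ℝ) := by
          rw [htc]
          have : (1:ℝ) ≤ (c : ℝ) := by exact_mod_cast hc1
          linarith
        exact_mod_cast this
      have hmem : ∀ p ∈ s, p.1.card = k ∧ p.2.card = t := by
        intro p hp
        rw [hs, Finset.mem_filter, hP1def, Finset.mem_filter, mem_badPairs] at hp
        obtain ⟨⟨⟨-, hcond⟩, hlt⟩, hck⟩ := hp
        refine ⟨hck, ?_⟩
        rcases hcond with ⟨-, -, hY⟩ | ⟨h1, -⟩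
        · rw [hck] at hY
          exact (card_cond_iff n dn hd k hcn p.2).1 hY
        · omega
      set B : ℝ := C * (n : ℝ) ^ (-(2 * dn * k)) with hB
      have hB0 : 0 ≤ B := mul_nonneg hC.le (Real.rpow_pos_of_pos hn0 _).le
      have hterm : ∀ p ∈ s, f p ≤ B := by
        intro p hp
        obtain ⟨h1, h2⟩ := hmem p hp
        rw [hf]
        simp only [h1, h2, hB]
        apply mul_le_mul_of_nonneg_left _ hC.le
        apply Real.rpow_le_rpow_of_exponent_le hn1
        rw [div_le_iff₀ hn0]
        have hk0' : (0:ℝ) < k := by exact_mod_cast hk1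
        nlinarith [mul_le_mul_of_nonneg_left ht3 (by positivity : (0:ℝ) ≤ 6 * dn * k)]
      have hchoose : n.choose t ≤ n ^ (c - 1) := by
        have h1 : n.choose t = n.choose (n - t) := (Nat.choose_symm htn).symm
        have h2 : n - t = c - 1 := by
          rw [ht, tOf, ← hc]
          omega
        rw [h1, h2]
        exact Nat.choose_le_pow n (c - 1)
      calc ∑ p ∈ s, f p ≤ s.card • B := Finset.sum_le_card_nsmul _ _ _ hterm
        _ = (s.card : ℝ) * B := by rw [nsmul_eq_mul]
        _ ≤ ((n.choose k * n.choose t : ℕ) : ℝ) * B := by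
            apply mul_le_mul_of_nonneg_right _ hB0
            exact_mod_cast card_pairs_le s k t hmem
        _ ≤ (n : ℝ) ^ k * (n : ℝ) ^ (c - 1) * B := by
            apply mul_le_mul_of_nonneg_right _ hB0
            push_cast
            have h1 : ((n.choose k : ℕ) : ℝ) ≤ (n : ℝ) ^ k := by
              exact_mod_cast Nat.choose_le_pow n k
            have h2 : ((n.choose t : ℕ) : ℝ) ≤ (n : ℝ) ^ (c - 1) := by
              exact_mod_cast hchoose
            have h3 : (0 : ℝ) ≤ (n.choose k : ℕ) := by positivity
            have h4 : (0 : ℝ) ≤ (n : ℝ) ^ (c - 1) := by positivity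
            nlinarith
        _ ≤ C * (n : ℝ) ^ (-(k : ℝ)) := by
            rw [hB]
            apply pow_mul_rpow_le n hn C hC k (c - 1) _ (k : ℝ)
            have hcast : ((c - 1 : ℕ) : ℝ) = (c : ℝ) - 1 := by
              have : 1 ≤ c := hc1
              push_cast [Nat.cast_sub this]
              ring
            rw [hcast]
            have hk0' : (0:ℝ) < k := by exact_mod_cast hk1
            nlinarith
  calc _ ≤ 2 * C / n + C / n := add_le_add hP1 hP2
    _ = 3 * C / n := by ring

end Aux

set_option maxHeartbeats 1000000 in
/-- if a sequence of random graph models satisfies, for all large `n` and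
all relevant pairs of disjoint sets `X, Y`, the bound
`Pr[e_G(X,Y) = 0] ≤ C·n^{-6d|X||Y|/n}`, then a random graph drawn from the `n`-th model
is a.a.s. an `(n,d)`-expander. -/
theorem stmt_13 (C : ℝ) (hC : 0 < C) (d : ℕ → ℝ) (hd : ∀ n, 3 ≤ d n)
    (μ : (n : ℕ) → Measure (SimpleGraph (Fin n)))
    (hμ : ∀ n, IsProbabilityMeasure (μ n))
    (h : ∃ N : ℕ, ∀ n, N ≤ n → ∀ X Y : Finset (Fin n), Disjoint X Y →
      ((1 ≤ X.card ∧ X.card < mOf n (d n) ∧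
          (Y.card : ℝ) = (n : ℝ) - (⌈(d n + 1) * X.card⌉ : ℝ) + 1) ∨
        (X.card = mOf n (d n) ∧ Y.card = mOf n (d n))) →
      μ n {G | eCount G X Y = 0} ≤
        ENNReal.ofReal (C * (n : ℝ) ^ (-(6 * d n * X.card * Y.card) / n))) :
    Filter.Tendsto (fun n => μ n {G | IsExpander G n (d n)})
      Filter.atTop (nhds 1) := by
  classical
  obtain ⟨N, hN⟩ := h
  have key : ∀ n, max N 2 ≤ n →
      μ n {G | ¬ IsExpander G n (d n)} ≤ ENNReal.ofReal (3 * C / n) := by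
    intro n hn
    have hnN : N ≤ n := le_trans (le_max_left _ _) hn
    have hn2 : 2 ≤ n := le_trans (le_max_right _ _) hn
    have hsub : {G : SimpleGraph (Fin n) | ¬ IsExpander G n (d n)} ⊆
        ⋃ p ∈ (badPairs n (d n) : Finset _), {G | eCount G p.1 p.2 = 0} := by
      intro G hG
      obtain ⟨X, Y, hdisj, hcond, hzero⟩ := exists_bad_pair n (d n) (hd n) G hG
      exact Set.mem_iUnion₂.2 ⟨(X, Y), mem_badPairs.2 ⟨hdisj, hcond⟩, hzero⟩
    calc μ n {G | ¬ IsExpander G n (d n)}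
        ≤ μ n (⋃ p ∈ (badPairs n (d n) : Finset _), {G | eCount G p.1 p.2 = 0}) :=
          measure_mono hsub
      _ ≤ ∑ p ∈ badPairs n (d n), μ n {G | eCount G p.1 p.2 = 0} :=
          measure_biUnion_finset_le _ _
      _ ≤ ∑ p ∈ badPairs n (d n),
            ENNReal.ofReal (C * (n : ℝ) ^ (-(6 * d n * p.1.card * p.2.card) / n)) := by
          refine Finset.sum_le_sum fun p hp => ?_
          rw [mem_badPairs] at hp
          exact hN n hnN p.1 p.2 hp.1 hp.2
      _ = ENNReal.ofReal
            (∑ p ∈ badPairs n (d n), C * (n : ℝ) ^ (-(6 * d n * p.1.card * p.2.card) / n)) := by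
          rw [ENNReal.ofReal_sum_of_nonneg]
          intro p _
          have hn0 : (0:ℝ) < n := by positivity
          positivity
      _ ≤ ENNReal.ofReal (3 * C / n) :=
          ENNReal.ofReal_le_ofReal (sum_bad_le n hn2 (d n) (hd n) C hC)
  have hbad0 : Filter.Tendsto (fun n => μ n {G | ¬ IsExpander G n (d n)})
      Filter.atTop (nhds 0) := by
    have hup : Filter.Tendsto (fun n : ℕ => ENNReal.ofReal (3 * C / n))
        Filter.atTop (nhds 0) := by
      have h1 : Filter.Tendsto (fun n : ℕ => (3 * C / n : ℝ)) Filter.atTop (nhds 0) :=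
        tendsto_const_div_atTop_nhds_zero_nat (3 * C)
      have h2 := ENNReal.tendsto_ofReal h1
      simpa using h2
    refine tendsto_of_tendsto_of_tendsto_of_le_of_le' tendsto_const_nhds hup ?_ ?_
    · exact Filter.Eventually.of_forall fun n => zero_le
    · filter_upwards [Filter.eventually_ge_atTop (max N 2)] with n hn
      exact key n hn
  have hgood : ∀ n, μ n {G | IsExpander G n (d n)} =
      1 - μ n {G | ¬ IsExpander G n (d n)} := by
    intro n
    have := hμ n
    have hms : MeasurableSet {G : SimpleGraph (Fin n) | ¬ IsExpander G n (d n)} :=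
      MeasurableSpace.measurableSet_top
    have hcompl : {G : SimpleGraph (Fin n) | IsExpander G n (d n)} =
        {G | ¬ IsExpander G n (d n)}ᶜ := by
      ext G; simp
    rw [hcompl, prob_compl_eq_one_sub hms]
  simp_rw [hgood]
  have := ENNReal.Tendsto.sub (tendsto_const_nhds (x := (1 : ENNReal)) (f := Filter.atTop))
    hbad0 (Or.inl ENNReal.one_ne_top)
  simpa using this
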